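/- For n = 2k+1 odd, the generalized Radon transform on ℝⁿ with the local kernel u = δ^{(k)} (the k-th derivative of the Dirac delta on ℝ) satisfies |ũ(c)| = |c|^{(n−1)/2}, and hence defines a unitary (generalized Fourier) transform; moreover δ^{(k)} is, up to modulus-one factor, the unique derivative of the delta function with this property. -/

import Mathlib

open Complex

lemma exp_eq (k n : ℕ) (hn : n = 2 * k + 1) : (((n : ℝ) - 1)/2) = (k : ℝ) := by
  subst hn; push_cast; ring

lemma crit (k n : ℕ) (hn : n = 2 * k + 1) :
    ∀ c : ℝ, ‖(Complex.I * (c : ℂ)) ^ k‖ = |c| ^ (((n : ℝ) - 1)/2) := by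
  intro c
  rw [exp_eq k n hn, Real.rpow_natCast, norm_pow, norm_mul, Complex.norm_I, one_mul, Complex.norm_real, Real.norm_eq_abs]

/-- For odd `n = 2k+1`, the kernel `u = δ^{(k)}`, whose Fourier transform is
`c ↦ (ic)^k`, satisfies the unitarity criterion `|ũ(c)| = |c|^{(n-1)/2}`, hence the
associated generalized Radon transform is a generalized Fourier transform; moreover among
the derivatives `δ^{(m)}` of the delta function (Fourier transforms `c ↦ (ic)^m`), `m = k`
is the unique one with this property. -/
theorem delta_derivative_kernel
    (k n : ℕ) (hn : n = 2 * k + 1) :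
    -- the criterion |ũ(c)| = |c|^{(n-1)/2} holds for ũ(c) = (ic)^k ...
    (∀ c : ℝ, ‖(Complex.I * (c : ℂ)) ^ k‖ = |c| ^ (((n : ℝ) - 1)/2)) ∧
    -- ... and δ^{(k)} is the unique derivative of δ with this property
    (∀ m : ℕ, (∀ c : ℝ, ‖(Complex.I * (c : ℂ)) ^ m‖ = |c| ^ (((n : ℝ) - 1)/2)) → m = k) := by
  refine ⟨crit k n hn, fun m hm => ?_⟩
  have h1 := hm 2
  have h2 := crit k n hn 2
  have hm2 : ‖(Complex.I * ((2 : ℝ) : ℂ)) ^ m‖ = (2 : ℝ) ^ m := by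
    rw [norm_pow, norm_mul, Complex.norm_I, one_mul]
    norm_num
  have hk2 : ‖(Complex.I * ((2 : ℝ) : ℂ)) ^ k‖ = (2 : ℝ) ^ k := by
    rw [norm_pow, norm_mul, Complex.norm_I, one_mul]
    norm_num
  have : ((2 : ℝ)) ^ m = (2 : ℝ) ^ k := by
    rw [← hm2, ← hk2, h1, h2]
  exact Nat.pow_right_injective (le_refl 2) (by exact_mod_cast this)
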